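/- arXiv:math/0605246 — 2 statements merged into one kernel-verified Lean document; each statement's English description precedes it below -/
import Mathlib

section
/- Let u, v be non-adjacent distinct vertices of {0,1}^d (Hamming distance ≥ 2), and let x be uniform over {0,1}^d. Then Pr[|δ(x,u) − δ(x,v)| ≤ 1] ≤ 3/4. -/
open Finset

-- bound on central binomial coefficient
lemma cb_bound : ∀ n, 2 ≤ n → 8 * Nat.centralBinom n ≤ 3 * 4 ^ n := by
  intro n hn
  induction n, hn using Nat.le_induction with
  | base => decide
  | succ n hn ih =>
    have key := Nat.succ_mul_centralBinom_succ n
    have h1 : (n + 1) * (8 * Nat.centralBinom (n + 1)) ≤ (n + 1) * (3 * 4 ^ (n + 1)) := by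
      have : (n + 1) * (8 * Nat.centralBinom (n + 1)) =
          8 * ((n + 1) * Nat.centralBinom (n + 1)) := by ring
      rw [this, key]
      have h4 : 0 < 4 ^ n := pow_pos (by norm_num) n
      calc 8 * (2 * (2 * n + 1) * Nat.centralBinom n)
          = 2 * (2 * n + 1) * (8 * Nat.centralBinom n) := by ring
        _ ≤ 2 * (2 * n + 1) * (3 * 4 ^ n) := Nat.mul_le_mul_left _ ih
        _ ≤ (n + 1) * (3 * 4 ^ (n + 1)) := by ring_nf; nlinarith
    exact Nat.le_of_mul_le_mul_left h1 (by omega)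

lemma two_choose_bound (n a b : ℕ) (hab : a ≠ b) (ha : a ≤ n) (hb : b ≤ n) :
    n.choose a + n.choose b ≤ 2 ^ n := by
  have : ({a, b} : Finset ℕ) ⊆ range (n + 1) := by
    intro x hx; simp at hx; rcases hx with h | h <;> simp [h] <;> omega
  calc n.choose a + n.choose b = ∑ m ∈ ({a, b} : Finset ℕ), n.choose m := by
        rw [Finset.sum_pair hab]
    _ ≤ ∑ m ∈ range (n + 1), n.choose m := Finset.sum_le_sum_of_subset this
    _ = 2 ^ n := Nat.sum_range_choose n

-- counting functions with prescribed values on S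
lemma prescribed_card {d : ℕ} (S : Finset (Fin d)) (g : Fin d → Bool) :
    (univ.filter fun x : Fin d → Bool => ∀ i ∈ S, x i = g i).card = 2 ^ (d - S.card) := by
  have : (univ.filter fun x : Fin d → Bool => ∀ i ∈ S, x i = g i) =
      Fintype.piFinset (fun i => if i ∈ S then {g i} else univ) := by
    ext x
    simp only [mem_filter, mem_univ, true_and, Fintype.mem_piFinset]
    constructor
    · intro h i; by_cases hi : i ∈ S <;> simp [hi]
      exact h i hi
    · intro h i hi; have := h i; simpa [hi] using this
  rw [this, Fintype.card_piFinset]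
  have h1 : ∀ i : Fin d, (if i ∈ S then ({g i} : Finset Bool) else univ).card
      = if i ∈ S then 1 else 2 := by
    intro i; by_cases hi : i ∈ S <;> simp [hi]
  rw [Finset.prod_congr rfl (fun i _ => h1 i), Finset.prod_ite]
  simp only [Finset.prod_const, one_pow, one_mul]
  congr 1
  have : univ.filter (fun i : Fin d => ¬ i ∈ S) = Sᶜ := by ext i; simp
  rw [this, Finset.card_compl, Fintype.card_fin]

theorem prob_close_le_three_quarters (d : ℕ) (u v : Fin d → Bool)
    (h2 : 2 ≤ hammingDist u v) :
    ((Finset.univ.filter fun x : Fin d → Bool =>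
        |(hammingDist x u : ℤ) - (hammingDist x v : ℤ)| ≤ 1).card : ℚ) / 2 ^ d ≤ 3 / 4 := by
  classical
  set S : Finset (Fin d) := univ.filter fun i => u i ≠ v i with hS
  set r : ℕ := S.card with hr
  have hrham : r = hammingDist u v := rfl
  have hrd : r ≤ d := by
    calc r ≤ (univ : Finset (Fin d)).card := Finset.card_le_card (filter_subset _ _)
      _ = d := by simp
  have hr2 : 2 ≤ r := hrham ▸ h2
  -- key pointwise identity
  have key : ∀ x : Fin d → Bool,
      (hammingDist x u : ℤ) - (hammingDist x v : ℤ)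
        = 2 * ((S.filter fun i => x i = v i).card : ℤ) - (r : ℤ) := by
    intro x
    have h1 : (hammingDist x u : ℤ) = ∑ i : Fin d, (if x i ≠ u i then (1:ℤ) else 0) := by
      rw [hammingDist, Finset.card_filter]; push_cast; rfl
    have h2 : (hammingDist x v : ℤ) = ∑ i : Fin d, (if x i ≠ v i then (1:ℤ) else 0) := by
      rw [hammingDist, Finset.card_filter]; push_cast; rfl
    have h3 : ((S.filter fun i => x i = v i).card : ℤ)
        = ∑ i : Fin d, (if u i ≠ v i ∧ x i = v i then (1:ℤ) else 0) := by
      rw [hS, Finset.filter_filter, Finset.card_filter]; push_cast; rfl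
    have h4 : (r : ℤ) = ∑ i : Fin d, (if u i ≠ v i then (1:ℤ) else 0) := by
      rw [hr, hS, Finset.card_filter]; push_cast; rfl
    rw [h1, h2, h3, h4, ← Finset.sum_sub_distrib, Finset.mul_sum, ← Finset.sum_sub_distrib]
    refine Finset.sum_congr rfl fun i _ => ?_
    cases hu : u i <;> cases hv : v i <;> cases hx : x i <;> simp [hu, hv, hx]
  set P : (Fin d → Bool) → Prop := fun x =>
    |(hammingDist x u : ℤ) - (hammingDist x v : ℤ)| ≤ 1 with hP
  set f : (Fin d → Bool) → Finset (Fin d) := fun x => S.filter fun i => x i = v i with hf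
  set B : Finset (Finset (Fin d)) :=
    S.powerset.filter fun T => |2 * (T.card : ℤ) - (r : ℤ)| ≤ 1 with hB
  -- main count
  have hmaps : ∀ x ∈ univ.filter P, f x ∈ B := by
    intro x hx
    rw [mem_filter] at hx
    rw [hB, mem_filter, mem_powerset]
    exact ⟨filter_subset _ _, by rw [← key x]; exact hx.2⟩
  have hcount : (univ.filter P).card ≤ B.card * 2 ^ (d - r) := by
    rw [Finset.card_eq_sum_card_fiberwise hmaps]
    have : ∀ T ∈ B, ((univ.filter P).filter fun x => f x = T).card ≤ 2 ^ (d - r) := by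
      intro T _
      set g : Fin d → Bool := fun i => if i ∈ T then v i else !(v i) with hg
      have hsub : (univ.filter P).filter (fun x => f x = T)
          ⊆ univ.filter fun x : Fin d → Bool => ∀ i ∈ S, x i = g i := by
        intro x hx
        rw [mem_filter] at hx ⊢
        refine ⟨mem_univ _, fun i hi => ?_⟩
        have hfx := hx.2
        by_cases hiT : i ∈ T
        · have : x i = v i := by
            have : i ∈ f x := hfx ▸ hiT
            rw [hf, mem_filter] at this; exact this.2
          simp [hg, hiT, this]
        · have : ¬ (x i = v i) := by
            intro hxv
            exact hiT (hfx ▸ (by rw [hf, mem_filter]; exact ⟨hi, hxv⟩))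
          simp [hg, hiT]
          cases hv : v i <;> cases hx' : x i <;> simp_all
      calc ((univ.filter P).filter fun x => f x = T).card
          ≤ (univ.filter fun x : Fin d → Bool => ∀ i ∈ S, x i = g i).card :=
            Finset.card_le_card hsub
        _ = 2 ^ (d - r) := prescribed_card S g
    calc ∑ T ∈ B, ((univ.filter P).filter fun x => f x = T).card
        ≤ ∑ T ∈ B, 2 ^ (d - r) := Finset.sum_le_sum this
      _ = B.card * 2 ^ (d - r) := by rw [Finset.sum_const, smul_eq_mul]
  -- bound on B.card
  have hBcard : 4 * B.card ≤ 3 * 2 ^ r := by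
    rcases Nat.even_or_odd r with ⟨s, hs⟩ | ⟨s, hs⟩
    · -- even: r = s + s, s ≥ 1
      have hs1 : 1 ≤ s := by omega
      have hsub : B ⊆ S.powersetCard s := by
        intro T hT
        rw [hB, mem_filter, mem_powerset] at hT
        rw [Finset.mem_powersetCard]
        refine ⟨hT.1, ?_⟩
        have := hT.2
        rw [abs_le] at this
        omega
      have h1 : B.card ≤ r.choose s := by
        calc B.card ≤ (S.powersetCard s).card := Finset.card_le_card hsub
          _ = r.choose s := by rw [Finset.card_powersetCard]
      obtain ⟨t, ht⟩ : ∃ t, s = t + 1 := ⟨s - 1, by omega⟩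
      have hchoose : r.choose s = (2*t+1).choose t + (2*t+1).choose (t+1) := by
        have : r = (2*t+1) + 1 := by omega
        rw [this, ht, Nat.choose_succ_succ]
      have hb : r.choose s ≤ 2 ^ (2*t+1) :=
        hchoose ▸ two_choose_bound (2*t+1) t (t+1) (by omega) (by omega) (by omega)
      have : r = 2*t+2 := by omega
      rw [this]
      calc 4 * B.card ≤ 4 * 2 ^ (2*t+1) := by
            exact Nat.mul_le_mul_left 4 (le_trans h1 hb)
        _ ≤ 3 * 2 ^ (2*t+2) := by rw [pow_succ]; ring_nf; omega
    · -- odd: r = 2s+1, s ≥ 1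
      have hs1 : 1 ≤ s := by omega
      have hsub : B ⊆ S.powersetCard s ∪ S.powersetCard (s+1) := by
        intro T hT
        rw [hB, mem_filter, mem_powerset] at hT
        rw [Finset.mem_union, Finset.mem_powersetCard, Finset.mem_powersetCard]
        have := hT.2
        rw [abs_le] at this
        have : T.card = s ∨ T.card = s + 1 := by omega
        rcases this with h | h
        · exact Or.inl ⟨hT.1, h⟩
        · exact Or.inr ⟨hT.1, h⟩
      have h1 : B.card ≤ r.choose s + r.choose (s+1) := by
        calc B.card ≤ (S.powersetCard s ∪ S.powersetCard (s+1)).card :=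
              Finset.card_le_card hsub
          _ ≤ (S.powersetCard s).card + (S.powersetCard (s+1)).card :=
              Finset.card_union_le _ _
          _ = r.choose s + r.choose (s+1) := by rw [Finset.card_powersetCard, Finset.card_powersetCard]
      have hcb : r.choose s + r.choose (s+1) = Nat.centralBinom (s+1) := by
        rw [hs, Nat.centralBinom]
        rw [show 2*(s+1) = (2*s+1)+1 from by ring, Nat.choose_succ_succ]
      have hcbb : 8 * Nat.centralBinom (s+1) ≤ 3 * 4 ^ (s+1) := cb_bound (s+1) (by omega)
      have h4 : 3 * 4^(s+1) = 2 * (3 * 2 ^ r) := by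
        rw [hs]; ring_nf
        rw [show (4:ℕ) = 2^2 from rfl, ← pow_mul]
        ring_nf
      omega
  -- combine
  have hfinal : 4 * (univ.filter P).card ≤ 3 * 2 ^ d := by
    calc 4 * (univ.filter P).card ≤ 4 * (B.card * 2 ^ (d - r)) :=
          Nat.mul_le_mul_left 4 hcount
      _ = (4 * B.card) * 2 ^ (d - r) := by ring
      _ ≤ (3 * 2 ^ r) * 2 ^ (d - r) := Nat.mul_le_mul_right _ hBcard
      _ = 3 * 2 ^ d := by rw [mul_assoc, ← pow_add]; congr 2; omega
  rw [div_le_div_iff₀ (by positivity) (by norm_num)]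
  have := (Nat.cast_le (α := ℚ)).mpr hfinal
  push_cast at this ⊢
  linarith
end

section
/- There exists a constant c such that for all sufficiently large d, there is a set S ⊆ {0,1}^d with |S| ≤ c·d/log d satisfying: for every pair of non-adjacent vertices u, v of H_d (Hamming distance ≥ 2), there exists x ∈ S with |δ(x,u) − δ(x,v)| ≥ 2. -/
open Finset

lemma cb_sq (n : ℕ) : (Nat.centralBinom n)^2 * (3*n+1) ≤ 16^n := by
  induction n with
  | zero => simp [Nat.centralBinom]
  | succ n ih =>
    have key := Nat.succ_mul_centralBinom_succ n
    have h1 : ((n+1) * Nat.centralBinom (n+1))^2 * (3*(n+1)+1) * (3*n+1)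
        = (2 * (2*n+1))^2 * (3*(n+1)+1) * ((Nat.centralBinom n)^2 * (3*n+1)) := by
      rw [key]; ring
    have h2 : (2 * (2*n+1))^2 * (3*(n+1)+1) * ((Nat.centralBinom n)^2 * (3*n+1))
        ≤ (2 * (2*n+1))^2 * (3*(n+1)+1) * 16^n := by
      exact Nat.mul_le_mul_left _ ih
    have h3 : (2 * (2*n+1))^2 * (3*(n+1)+1) ≤ 16 * ((n+1)^2 * (3*n+1)) := by nlinarith
    have h4 : ((n+1) * Nat.centralBinom (n+1))^2 * (3*(n+1)+1) * (3*n+1)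
        ≤ 16 * ((n+1)^2 * (3*n+1)) * 16^n := h1 ▸ (h2.trans (Nat.mul_le_mul_right _ h3))
    have h5 : (Nat.centralBinom (n+1))^2 * (3*(n+1)+1) * ((n+1)^2 * (3*n+1))
        ≤ 16^(n+1) * ((n+1)^2 * (3*n+1)) := by
      calc (Nat.centralBinom (n+1))^2 * (3*(n+1)+1) * ((n+1)^2 * (3*n+1))
          = ((n+1) * Nat.centralBinom (n+1))^2 * (3*(n+1)+1) * (3*n+1) := by ring
        _ ≤ 16 * ((n+1)^2 * (3*n+1)) * 16^n := h4
        _ = 16^(n+1) * ((n+1)^2 * (3*n+1)) := by ring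
    exact Nat.le_of_mul_le_mul_right h5 (by positivity)

def NN (k : ℕ) : ℕ := Nat.centralBinom ((k+1)/2)

lemma NN_sq {k : ℕ} (hk : 1 ≤ k) : (NN k)^2 * k ≤ 4 * 4^k := by
  have h1 : (NN k)^2 * k ≤ (NN k)^2 * (3*((k+1)/2)+1) := Nat.mul_le_mul_left _ (by omega)
  have h2 := cb_sq ((k+1)/2)
  have h3 : (16:ℕ)^((k+1)/2) = 4^(2*((k+1)/2)) := by
    rw [pow_mul]; norm_num
  have h4 : (4:ℕ)^(2*((k+1)/2)) ≤ 4^(k+1) := Nat.pow_le_pow_right (by norm_num) (by omega)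
  calc (NN k)^2 * k ≤ (NN k)^2 * (3*((k+1)/2)+1) := h1
    _ ≤ 16^((k+1)/2) := h2
    _ = 4^(2*((k+1)/2)) := h3
    _ ≤ 4^(k+1) := h4
    _ = 4 * 4^k := by rw [pow_succ]; ring

lemma NN_le : ∀ {k : ℕ}, 2 ≤ k → 4 * NN k ≤ 3 * 2^k := by
  have big : ∀ m : ℕ, 4 * NN (m+5) ≤ 3 * 2^(m+5) := by
    intro m
    set k := m + 5 with hkdef
    set n := (k+1)/2 with hn
    have hn3 : 3 ≤ n := by omega
    have h2n : 2*n ≤ k+1 := by omega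
    have hNN : NN k = Nat.centralBinom n := rfl
    have hsq : (4*NN k)^2 * (3*n+1) ≤ (3*2^k)^2 * (3*n+1) := by
      have e1 : (4*NN k)^2 * (3*n+1) = 16 * ((Nat.centralBinom n)^2 * (3*n+1)) := by
        rw [hNN]; ring
      have e2 : (16:ℕ)^n = 4^(2*n) := by rw [pow_mul]; norm_num
      have e3 : (4:ℕ)^(2*n) ≤ 4^(k+1) := Nat.pow_le_pow_right (by norm_num) h2n
      have e4 : (3*2^k)^2 * (3*n+1) = 9 * (3*n+1) * 4^k := by
        have : ((2:ℕ)^k)^2 = 4^k := by rw [← pow_mul, mul_comm k 2, pow_mul]; norm_num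
        rw [mul_pow, this]; ring
      calc (4*NN k)^2 * (3*n+1) = 16 * ((Nat.centralBinom n)^2 * (3*n+1)) := e1
        _ ≤ 16 * 16^n := Nat.mul_le_mul_left _ (cb_sq n)
        _ = 16 * 4^(2*n) := by rw [e2]
        _ ≤ 16 * 4^(k+1) := Nat.mul_le_mul_left _ e3
        _ = 64 * 4^k := by rw [pow_succ]; ring
        _ ≤ 9 * (3*n+1) * 4^k := Nat.mul_le_mul_right _ (by omega)
        _ = (3*2^k)^2 * (3*n+1) := e4.symm
    have hc := Nat.le_of_mul_le_mul_right hsq (by omega)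
    exact (Nat.pow_le_pow_iff_left (n := 2) (by norm_num)).mp hc
  intro k hk
  match k, hk with
  | 2, _ => decide
  | 3, _ => decide
  | 4, _ => decide
  | (m+5), _ => exact big m

lemma helper_pow : ∀ t : ℕ, 8 ≤ t → (2*t+1)^2 ≤ 7 * 2^t := by
  intro t ht
  induction t with
  | zero => omega
  | succ n ih =>
    rcases Nat.lt_or_ge n 8 with h | h
    · interval_cases n <;> norm_num
    · have := ih h
      have h2 : (2*(n+1)+1)^2 ≤ 2 * (2*n+1)^2 := by nlinarith
      calc (2*(n+1)+1)^2 ≤ 2 * (2*n+1)^2 := h2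
        _ ≤ 2 * (7 * 2^n) := by omega
        _ = 7 * 2^(n+1) := by ring

lemma two_three_le_four : ∀ (E m : ℕ), 3*E ≤ m → 2^E * 3^m ≤ 4^m := by
  intro E
  induction E with
  | zero => intro m _; simpa using Nat.pow_le_pow_left (by norm_num) m
  | succ e ih =>
    intro m hm
    obtain ⟨m', rfl⟩ : ∃ m', m = m' + 3 := ⟨m - 3, by omega⟩
    have h1 := ih m' (by omega)
    calc 2^(e+1) * 3^(m'+3) = 54 * (2^e * 3^m') := by ring
      _ ≤ 54 * 4^m' := Nat.mul_le_mul_left _ h1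
      _ ≤ 64 * 4^m' := Nat.mul_le_mul_right _ (by norm_num)
      _ = 4^(m'+3) := by ring

section counting
variable {d : ℕ}

def suppP (p : Fin d → Option Bool) : Finset (Fin d) :=
  Finset.univ.filter fun i => (p i).isSome

def Kp (p : Fin d → Option Bool) : ℕ := (suppP p).card

def Ap (p : Fin d → Option Bool) (x : Fin d → Bool) : ℕ :=
  (Finset.univ.filter fun i => p i = some (x i)).card

lemma card_Ap (p : Fin d → Option Bool) (a : ℕ) :
    (Finset.univ.filter fun x : Fin d → Bool => Ap p x = a).card
      = (Kp p).choose a * 2^(d - Kp p) := by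
  classical
  have key : (Finset.univ.filter fun x : Fin d → Bool => Ap p x = a).card
      = (((suppP p).powersetCard a) ×ˢ ((Finset.univ \ suppP p).powerset)).card := by
    apply Finset.card_nbij'
      (i := fun x => (Finset.univ.filter fun i => p i = some (x i),
                      (Finset.univ \ suppP p).filter fun i => x i = true))
      (j := fun T => fun i =>
        if i ∈ suppP p then (if i ∈ T.1 then (p i).getD false else !((p i).getD false))
        else decide (i ∈ T.2))
    · intro x hx
      simp only [mem_coe, mem_filter, mem_univ, true_and] at hx
      rw [Finset.mem_coe, Finset.mem_product]
      constructor
      · rw [Finset.mem_powersetCard]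
        refine ⟨?_, hx⟩
        intro i hi
        simp only [mem_filter, mem_univ, true_and] at hi ⊢
        simp [suppP, hi]
      · rw [Finset.mem_powerset]
        exact Finset.filter_subset _ _
    · intro T hT
      rw [Finset.mem_coe, Finset.mem_product] at hT
      obtain ⟨hT1, hT2⟩ := hT
      rw [Finset.mem_powersetCard] at hT1
      simp only [mem_coe, mem_filter, mem_univ, true_and]
      -- Ap of the constructed x equals a
      have hfil : (Finset.univ.filter fun i => p i = some (
          if i ∈ suppP p then (if i ∈ T.1 then (p i).getD false else !((p i).getD false))
          else decide (i ∈ T.2))) = T.1 := by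
        ext i
        simp only [mem_filter, mem_univ, true_and]
        by_cases hs : i ∈ suppP p
        · simp only [hs, if_true]
          have hsome : (p i).isSome := by simpa [suppP] using hs
          obtain ⟨b, hb⟩ := Option.isSome_iff_exists.mp hsome
          by_cases ht : i ∈ T.1
          · simp [ht, hb]
          · simp [ht, hb]
        · have : i ∉ T.1 := fun h => hs (hT1.1 h)
          have hnone : p i = none := by
            simp only [suppP, mem_filter, mem_univ, true_and] at hs
            exact Option.not_isSome_iff_eq_none.mp hs
          simp [hs, hnone, this]
      rw [Ap, hfil, hT1.2]
    · intro x hx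
      simp only [mem_coe, mem_filter, mem_univ, true_and] at hx
      funext i
      by_cases hs : i ∈ suppP p
      · have hsome : (p i).isSome := by simpa [suppP] using hs
        obtain ⟨b, hb⟩ := Option.isSome_iff_exists.mp hsome
        simp only [hs, if_true, mem_filter, mem_univ, true_and, hb]
        by_cases hxb : x i = b
        · simp [hxb, hb]
        · have : b ≠ x i := fun h => hxb h.symm
          simp [hb, this, Option.getD]
          cases hx2 : x i <;> cases b <;> simp_all
      · have hnone : p i = none := by
          simp only [suppP, mem_filter, mem_univ, true_and] at hs
          exact Option.not_isSome_iff_eq_none.mp hs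
        simp [hs, hnone]
    · intro T hT
      rw [Finset.mem_coe, Finset.mem_product] at hT
      obtain ⟨hT1, hT2⟩ := hT
      rw [Finset.mem_powersetCard] at hT1
      rw [Finset.mem_powerset] at hT2
      have h1 : (Finset.univ.filter fun i => p i = some (
          if i ∈ suppP p then (if i ∈ T.1 then (p i).getD false else !((p i).getD false))
          else decide (i ∈ T.2))) = T.1 := by
        ext i
        simp only [mem_filter, mem_univ, true_and]
        by_cases hs : i ∈ suppP p
        · simp only [hs, if_true]
          have hsome : (p i).isSome := by simpa [suppP] using hs
          obtain ⟨b, hb⟩ := Option.isSome_iff_exists.mp hsome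
          by_cases ht : i ∈ T.1
          · simp [ht, hb]
          · simp [ht, hb]
        · have : i ∉ T.1 := fun h => hs (hT1.1 h)
          have hnone : p i = none := by
            simp only [suppP, mem_filter, mem_univ, true_and] at hs
            exact Option.not_isSome_iff_eq_none.mp hs
          simp [hs, hnone, this]
      have h2 : ((Finset.univ \ suppP p).filter fun i => (
          if i ∈ suppP p then (if i ∈ T.1 then (p i).getD false else !((p i).getD false))
          else decide (i ∈ T.2)) = true) = T.2 := by
        ext i
        simp only [mem_filter, mem_sdiff, mem_univ, true_and]
        by_cases hs : i ∈ suppP p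
        · simp only [hs]
          have : i ∉ T.2 := fun h => absurd hs (Finset.mem_sdiff.mp (hT2 h)).2
          simp [this]
        · simp [hs]
      exact Prod.ext h1 h2
  rw [key, Finset.card_product, Finset.card_powersetCard, Finset.card_powerset,
    Finset.card_sdiff_of_subset (Finset.subset_univ _), Finset.card_univ, Fintype.card_fin]
  rfl

def BadXs (p : Fin d → Option Bool) : Finset (Fin d → Bool) :=
  Finset.univ.filter fun x => ((Kp p : ℤ) - 2 * (Ap p x)).natAbs ≤ 1

lemma card_BadXs (p : Fin d → Option Bool) :
    (BadXs p).card ≤ NN (Kp p) * 2^(d - Kp p) := by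
  classical
  rcases Nat.even_or_odd (Kp p) with ⟨n, hn⟩ | ⟨n, hn⟩
  · have hsub : BadXs p ⊆ (Finset.univ.filter fun x : Fin d → Bool => Ap p x = n) := by
      intro x hx
      simp only [BadXs, mem_filter, mem_univ, true_and] at hx
      simp only [mem_filter, mem_univ, true_and]
      omega
    have hcard := (Finset.card_le_card hsub)
    rw [card_Ap] at hcard
    refine hcard.trans (Nat.mul_le_mul_right _ ?_)
    have h3 : (Kp p).choose n = NN (Kp p) := by
      rw [NN, show (Kp p + 1)/2 = n by omega, Nat.centralBinom, show 2*n = Kp p by omega]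
    omega
  · have hsub : BadXs p ⊆ (Finset.univ.filter fun x : Fin d → Bool => Ap p x = n)
        ∪ (Finset.univ.filter fun x : Fin d → Bool => Ap p x = n+1) := by
      intro x hx
      simp only [BadXs, mem_filter, mem_univ, true_and] at hx
      simp only [mem_union, mem_filter, mem_univ, true_and]
      omega
    have hcard := (Finset.card_le_card hsub).trans (Finset.card_union_le _ _)
    rw [card_Ap, card_Ap] at hcard
    refine hcard.trans ?_
    rw [← Nat.add_mul]
    refine Nat.mul_le_mul_right _ ?_
    have h3 : (Kp p).choose n + (Kp p).choose (n+1) = NN (Kp p) := by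
      rw [NN, show (Kp p + 1)/2 = n+1 by omega, Nat.centralBinom,
        show 2*(n+1) = (2*n+1)+1 by ring, show (2*n+1) = Kp p from by omega,
        Nat.choose_succ_succ]
    omega

lemma card_Kp_fiber (k : ℕ) :
    (Finset.univ.filter fun p : Fin d → Option Bool => Kp p = k).card = d.choose k * 2^k := by
  classical
  rw [Finset.card_eq_sum_card_fiberwise (f := suppP)
    (t := Finset.univ.powersetCard k)
    (fun p hp => by
      rw [Finset.mem_coe, Finset.mem_powersetCard_univ]
      exact (Finset.mem_filter.mp hp).2)]
  have hfib : ∀ D ∈ Finset.univ.powersetCard k,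
      (((Finset.univ.filter fun p : Fin d → Option Bool => Kp p = k)).filter
        fun p => suppP p = D).card = 2^k := by
    intro D hD
    rw [Finset.mem_powersetCard_univ] at hD
    have heq : ((Finset.univ.filter fun p : Fin d → Option Bool => Kp p = k)).filter
        (fun p => suppP p = D) = Finset.univ.filter fun p => suppP p = D := by
      ext p
      simp only [Finset.filter_filter, mem_filter, mem_univ, true_and]
      constructor
      · rintro ⟨_, h⟩; exact h
      · intro h; exact ⟨by rw [Kp, h, hD], h⟩
    rw [heq]
    have hbij : (Finset.univ.filter fun p : Fin d → Option Bool => suppP p = D).card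
        = D.powerset.card := by
      apply Finset.card_nbij' (i := fun p => D.filter fun i => p i = some true)
        (j := fun S i => if i ∈ D then some (decide (i ∈ S)) else none)
      · intro p hp
        exact Finset.mem_powerset.mpr (Finset.filter_subset _ _)
      · intro S hS
        simp only [mem_coe, mem_filter, mem_univ, true_and]
        ext i
        simp only [suppP, mem_filter, mem_univ, true_and]
        by_cases hi : i ∈ D <;> simp [hi]
      · intro p hp
        simp only [mem_coe, mem_filter, mem_univ, true_and] at hp
        funext i
        by_cases hi : i ∈ D
        · have : (p i).isSome := by
            have : i ∈ suppP p := hp ▸ hi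
            simpa [suppP] using this
          obtain ⟨b, hb⟩ := Option.isSome_iff_exists.mp this
          simp only [hi, if_true, mem_filter, hb]
          cases b <;> simp
        · have : i ∉ suppP p := hp ▸ hi
          simp only [suppP, mem_filter, mem_univ, true_and] at this
          have : p i = none := Option.not_isSome_iff_eq_none.mp this
          simp [hi, this]
      · intro S hS
        rw [Finset.mem_coe, Finset.mem_powerset] at hS
        ext i
        simp only [mem_filter]
        by_cases hi : i ∈ D
        · simp only [hi, if_true, true_and]
          constructor
          · intro h; simpa using h
          · intro h; simp [h]
        · have : i ∉ S := fun h => hi (hS h)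
          simp [hi, this]
    rw [hbij, Finset.card_powerset, hD]
  rw [Finset.sum_congr rfl hfib]
  rw [Finset.sum_const, Finset.card_powersetCard, Finset.card_univ, Fintype.card_fin,
    smul_eq_mul]

lemma card_rows (m : ℕ) (B : Finset (Fin d → Bool)) :
    (Finset.univ.filter fun M : Fin m → (Fin d → Bool) => ∀ j, M j ∈ B).card = B.card ^ m := by
  classical
  have h : (Finset.univ.filter fun M : Fin m → (Fin d → Bool) => ∀ j, M j ∈ B)
      = Fintype.piFinset (fun _ => B) := by
    ext M; simp [Fintype.mem_piFinset]
  rw [h, Fintype.card_piFinset]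
  simp

end counting

lemma core (d L m k : ℕ) (hL16 : 16 ≤ L) (hdL : 2^L ≤ d) (hdU : d < 2^(L+1))
    (hmL : 99*d ≤ L*m) (hmLu : L*m ≤ 100*d) (hk2 : 2 ≤ k) (hkd : k ≤ d) :
    (d+1) * d.choose k * 2^k * (NN k)^m ≤ 2^(k*m) := by
  have hd1 : 1 ≤ d := le_trans Nat.one_le_two_pow hdL
  have hd0 : d ≠ 0 := by omega
  have hLd : L ≤ d := le_trans (le_of_lt (Nat.lt_pow_self (by norm_num) : L < 2^L)) hdL
  have h16m : 16*m ≤ 100*d := le_trans (Nat.mul_le_mul_right m hL16) hmLu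
  obtain ⟨s, hs⟩ : ∃ s, s = Nat.sqrt d := ⟨_, rfl⟩
  obtain ⟨hf, hh⟩ : ∃ hf, hf = L/2 := ⟨_, rfl⟩
  have hss : s*s ≤ d := by rw [hs, ← pow_two]; exact Nat.sqrt_le' d
  have h2h : 2^hf ≤ s := by
    rw [hs, Nat.le_sqrt]
    calc 2^hf * 2^hf = 2^(hf+hf) := by rw [pow_add]
      _ ≤ 2^L := Nat.pow_le_pow_right (by norm_num) (by omega)
      _ ≤ d := hdL
  have hLsq : L^2 ≤ 8*s := by
    have h8 : 8 ≤ hf := by omega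
    have := helper_pow hf h8
    have hL2h : L ≤ 2*hf+1 := by omega
    calc L^2 ≤ (2*hf+1)^2 := Nat.pow_le_pow_left hL2h 2
      _ ≤ 7*2^hf := this
      _ ≤ 8*s := by
          have := h2h; nlinarith
  have hs1 : 1 ≤ s := by rw [hs, Nat.le_sqrt]; omega
  rcases le_or_gt k s with hks | hks
  · -- small k
    have hE : (d+1) * d.choose k * 2^k ≤ 2^((L+2)*(k+1)) := by
      have h1 : d+1 ≤ 2^(L+1) := hdU
      have h2 : d.choose k ≤ d^k := Nat.choose_le_pow d k
      have h3 : d^k ≤ (2^(L+1))^k := Nat.pow_le_pow_left (le_of_lt hdU) k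
      calc (d+1) * d.choose k * 2^k ≤ 2^(L+1) * (2^(L+1))^k * 2^k := by
            exact Nat.mul_le_mul (Nat.mul_le_mul h1 (h2.trans h3)) (le_refl _)
        _ = 2^((L+1) + (L+1)*k + k) := by rw [← pow_mul, ← pow_add, ← pow_add]
        _ ≤ 2^((L+2)*(k+1)) := Nat.pow_le_pow_right (by norm_num) (by ring_nf; omega)
    have hEm : 3*((L+2)*(k+1)) ≤ m := by
      -- 3(L+2)(k+1) ≤ 12 L s and 12 L s * L ≤ 96 s^2 ≤ 96 d ≤ 99d ≤ m L
      have e1 : 3*((L+2)*(k+1)) ≤ 12*(L*s) := by nlinarith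
      have e2 : 12*(L*s) * L ≤ 96 * (s*s) := by nlinarith [hLsq]
      have e3 : (96:ℕ) * (s*s) ≤ 96 * d := by omega
      have e4 : 12*(L*s)*L ≤ L*m := by omega
      have e5 : (12*(L*s))*L ≤ m*L := by rw [mul_comm m L]; omega
      have e6 : 12*(L*s) ≤ m := Nat.le_of_mul_le_mul_right e5 (by omega)
      omega
    -- assemble
    have key : ((d+1) * d.choose k * 2^k * (NN k)^m) * 4^m ≤ 2^(k*m) * 4^m := by
      have c1 : (4:ℕ)^m * (NN k)^m = (4 * NN k)^m := by rw [mul_pow]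
      have c2 : (4 * NN k)^m ≤ (3 * 2^k)^m := Nat.pow_le_pow_left (NN_le hk2) m
      have c3 : (3 * 2^k)^m = 3^m * 2^(k*m) := by rw [mul_pow, ← pow_mul]
      have c4 : 2^((L+2)*(k+1)) * 3^m ≤ 4^m := two_three_le_four _ _ hEm
      calc ((d+1) * d.choose k * 2^k * (NN k)^m) * 4^m
          = ((d+1) * d.choose k * 2^k) * (4^m * (NN k)^m) := by ring
        _ ≤ 2^((L+2)*(k+1)) * ((3 * 2^k)^m) := Nat.mul_le_mul hE (c1 ▸ c2)
        _ = (2^((L+2)*(k+1)) * 3^m) * 2^(k*m) := by rw [c3]; ring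
        _ ≤ 4^m * 2^(k*m) := Nat.mul_le_mul_right _ c4
        _ = 2^(k*m) * 4^m := by ring
    exact Nat.le_of_mul_le_mul_right key (by positivity)
  · -- large k
    have hkh : 2^hf ≤ k := le_trans h2h (le_of_lt hks)
    have hP1 : ((d+1) * d.choose k * 2^k)^2 ≤ 2^(2*(L+1)+4*d) := by
      have h1 : d+1 ≤ 2^(L+1) := hdU
      have h2 : d.choose k ≤ 2^d := by
        calc d.choose k ≤ ∑ i ∈ Finset.range (d+1), d.choose i :=
            Finset.single_le_sum (fun i _ => Nat.zero_le _) (Finset.mem_range.mpr (by omega))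
          _ = 2^d := Nat.sum_range_choose d
      have h3 : (2:ℕ)^k ≤ 2^d := Nat.pow_le_pow_right (by norm_num) hkd
      calc ((d+1) * d.choose k * 2^k)^2 ≤ (2^(L+1) * 2^d * 2^d)^2 := by
            exact Nat.pow_le_pow_left (Nat.mul_le_mul (Nat.mul_le_mul h1 h2) h3) 2
        _ = 2^(2*(L+1)+4*d) := by rw [← pow_add, ← pow_add, ← pow_mul]; ring_nf
    have hP4 : 2*(L+1)+4*d+2*m ≤ hf*m := by
      have hA : L*m ≤ 2*(hf*m)+m := by
        have h' : L*m ≤ (2*hf+1)*m := Nat.mul_le_mul_right m (by omega)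
        calc L*m ≤ (2*hf+1)*m := h'
          _ = 2*(hf*m)+m := by ring
      omega
    have key2 : (((d+1) * d.choose k * 2^k) * (NN k)^m)^2 * k^m ≤ (2^(k*m))^2 * k^m := by
      have c1 : ((NN k)^m)^2 * k^m = ((NN k)^2 * k)^m := by rw [mul_pow, ← pow_mul, ← pow_mul, mul_comm m 2]
      have c2 : ((NN k)^2 * k)^m ≤ (4*4^k)^m := Nat.pow_le_pow_left (NN_sq (by omega)) m
      have c3 : ((4:ℕ)*4^k)^m = 4^m * 4^(k*m) := by rw [mul_pow, ← pow_mul]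
      have c4 : (4:ℕ)^m * 4^(k*m) = 2^(2*m) * 2^(2*(k*m)) := by
        rw [show (4:ℕ) = 2^2 by norm_num, ← pow_mul, ← pow_mul]
      have step : (((d+1) * d.choose k * 2^k) * (NN k)^m)^2 * k^m
          ≤ 2^(2*(L+1)+4*d) * (2^(2*m) * 2^(2*(k*m))) := by
        calc (((d+1) * d.choose k * 2^k) * (NN k)^m)^2 * k^m
            = ((d+1) * d.choose k * 2^k)^2 * (((NN k)^m)^2 * k^m) := by ring
          _ ≤ 2^(2*(L+1)+4*d) * (2^(2*m) * 2^(2*(k*m))) := by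
              refine Nat.mul_le_mul hP1 ?_
              rw [c1, ← c4, ← c3]
              exact c2
      refine step.trans ?_
      have e1 : 2^(2*(L+1)+4*d) * (2^(2*m) * 2^(2*(k*m))) = 2^(2*(L+1)+4*d+2*m) * 2^(2*(k*m)) := by
        rw [← mul_assoc, ← pow_add]
      have e2 : (2:ℕ)^(2*(L+1)+4*d+2*m) ≤ 2^(hf*m) := Nat.pow_le_pow_right (by norm_num) hP4
      have e3 : (2:ℕ)^(hf*m) ≤ k^m := by
        calc (2:ℕ)^(hf*m) = (2^hf)^m := by rw [pow_mul]
          _ ≤ k^m := Nat.pow_le_pow_left hkh m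
      calc 2^(2*(L+1)+4*d) * (2^(2*m) * 2^(2*(k*m))) = 2^(2*(L+1)+4*d+2*m) * 2^(2*(k*m)) := e1
        _ ≤ k^m * 2^(2*(k*m)) := Nat.mul_le_mul_right _ (e2.trans e3)
        _ = (2^(k*m))^2 * k^m := by rw [← pow_mul, mul_comm 2 (k*m)]; ring
    have hkpos : 0 < k^m := Nat.pow_pos (by omega)
    have hsq := Nat.le_of_mul_le_mul_right key2 hkpos
    exact (Nat.pow_le_pow_iff_left (n := 2) (by norm_num)).mp hsq

lemma master (d : ℕ) (hd : 2^16 ≤ d) :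
    ∃ S : Finset (Fin d → Bool), S.card ≤ 100*d / Nat.log 2 d ∧
      ∀ p : Fin d → Option Bool, 2 ≤ Kp p →
        ∃ x ∈ S, 2 ≤ ((Kp p : ℤ) - 2 * (Ap p x)).natAbs := by
  classical
  obtain ⟨L, hL⟩ : ∃ L, L = Nat.log 2 d := ⟨_, rfl⟩
  obtain ⟨m, hm⟩ : ∃ m, m = 100*d / L := ⟨_, rfl⟩
  have hd0 : d ≠ 0 := by positivity
  have hL16 : 16 ≤ L := hL ▸ (Nat.le_log_iff_pow_le (by norm_num) hd0).mpr hd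
  have hdL : 2^L ≤ d := hL ▸ Nat.pow_log_le_self 2 hd0
  have hdU : d < 2^(L+1) := hL ▸ Nat.lt_pow_succ_log_self (by norm_num) d
  have hLd : L ≤ d := hL ▸ Nat.log_le_self 2 d
  have hmod := Nat.div_add_mod (100*d) L
  rw [← hm] at hmod
  have hmodlt : 100*d % L < L := Nat.mod_lt _ (by omega)
  have hmL : 99*d ≤ L*m := by omega
  have hmLu : L*m ≤ 100*d := by omega
  -- the set of relevant patterns
  set P : Finset (Fin d → Option Bool) := Finset.univ.filter (fun p => 2 ≤ Kp p) with hP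
  -- the bad matrices
  set Bad : Finset (Fin m → Fin d → Bool) :=
    Finset.univ.filter (fun M => ∃ p ∈ P, ∀ j, M j ∈ BadXs p) with hBad
  have hKle : ∀ p : Fin d → Option Bool, Kp p ≤ d := by
    intro p
    calc Kp p ≤ Fintype.card (Fin d) := Finset.card_le_univ _
      _ = d := Fintype.card_fin d
  -- union bound
  have hBadle : Bad.card ≤ ∑ p ∈ P, (NN (Kp p) * 2^(d - Kp p))^m := by
    have hsub : Bad ⊆ P.biUnion (fun p =>
        Finset.univ.filter fun M : Fin m → (Fin d → Bool) => ∀ j, M j ∈ BadXs p) := by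
      intro M hM
      simp only [hBad, mem_filter, mem_univ, true_and] at hM
      obtain ⟨p, hp, hall⟩ := hM
      exact Finset.mem_biUnion.mpr ⟨p, hp, by simp [hall]⟩
    calc Bad.card ≤ _ := Finset.card_le_card hsub
      _ ≤ ∑ p ∈ P, (Finset.univ.filter fun M : Fin m → (Fin d → Bool) =>
            ∀ j, M j ∈ BadXs p).card := Finset.card_biUnion_le
      _ = ∑ p ∈ P, (BadXs p).card ^ m := by
          refine Finset.sum_congr rfl fun p _ => ?_
          exact card_rows m (BadXs p)
      _ ≤ ∑ p ∈ P, (NN (Kp p) * 2^(d - Kp p))^m :=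
          Finset.sum_le_sum fun p _ => Nat.pow_le_pow_left (card_BadXs p) m
  -- group by Kp
  have hgroup : ∑ p ∈ P, (NN (Kp p) * 2^(d - Kp p))^m
      = ∑ k ∈ Finset.Icc 2 d, (P.filter fun p => Kp p = k).card * (NN k * 2^(d - k))^m := by
    rw [← Finset.sum_fiberwise_of_maps_to (g := Kp) (t := Finset.Icc 2 d)
      (fun p hp => Finset.mem_Icc.mpr ⟨(Finset.mem_filter.mp hp).2, hKle p⟩)]
    refine Finset.sum_congr rfl fun k _ => ?_
    rw [Finset.sum_congr rfl (fun p hp => by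
      rw [(Finset.mem_filter.mp hp).2]), Finset.sum_const, smul_eq_mul]
  have hfibcard : ∀ k, (P.filter fun p => Kp p = k).card ≤ d.choose k * 2^k := by
    intro k
    rw [← card_Kp_fiber k]
    exact Finset.card_le_card (fun p hp => by
      simp only [mem_filter, mem_univ, true_and] at hp ⊢
      exact hp.2)
  -- per-k bound
  have hperk : ∀ k ∈ Finset.Icc 2 d,
      (d+1) * (d.choose k * 2^k * (NN k * 2^(d - k))^m) ≤ 2^(d*m) := by
    intro k hk
    rw [Finset.mem_Icc] at hk
    have hcore := core d L m k hL16 hdL hdU hmL hmLu hk.1 hk.2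
    have e1 : (NN k * 2^(d-k))^m = (NN k)^m * 2^((d-k)*m) := by
      rw [mul_pow, ← pow_mul]
    have e2 : (2:ℕ)^(k*m) * 2^((d-k)*m) = 2^(d*m) := by
      rw [← pow_add, ← Nat.add_mul]
      congr 2
      omega
    calc (d+1) * (d.choose k * 2^k * (NN k * 2^(d-k))^m)
        = ((d+1) * d.choose k * 2^k * (NN k)^m) * 2^((d-k)*m) := by rw [e1]; ring
      _ ≤ 2^(k*m) * 2^((d-k)*m) := Nat.mul_le_mul_right _ hcore
      _ = 2^(d*m) := e2
  -- total
  have htot : Bad.card < 2^(d*m) := by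
    have h1 : (d+1) * Bad.card ≤ (d-1) * 2^(d*m) := by
      calc (d+1) * Bad.card ≤ (d+1) * ∑ k ∈ Finset.Icc 2 d,
            (P.filter fun p => Kp p = k).card * (NN k * 2^(d - k))^m := by
            refine Nat.mul_le_mul_left _ ?_
            rw [← hgroup]; exact hBadle
        _ = ∑ k ∈ Finset.Icc 2 d, (d+1) * ((P.filter fun p => Kp p = k).card * (NN k * 2^(d - k))^m) := by
            rw [Finset.mul_sum]
        _ ≤ ∑ k ∈ Finset.Icc 2 d, 2^(d*m) := by
            refine Finset.sum_le_sum fun k hk => ?_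
            refine le_trans ?_ (hperk k hk)
            refine Nat.mul_le_mul_left _ ?_
            exact Nat.mul_le_mul_right _ (hfibcard k)
        _ = (Finset.Icc 2 d).card * 2^(d*m) := by rw [Finset.sum_const, smul_eq_mul]
        _ = (d-1) * 2^(d*m) := by rw [Nat.card_Icc]; congr 1
    have h2 : (d-1) * 2^(d*m) < (d+1) * 2^(d*m) := by
      have : (0:ℕ) < 2^(d*m) := Nat.pow_pos (by norm_num)
      have hdd : d - 1 < d + 1 := by omega
      exact (Nat.mul_lt_mul_right this).mpr hdd
    have := lt_of_le_of_lt h1 h2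
    exact Nat.lt_of_mul_lt_mul_left this
  -- find a good matrix
  have hcardU : Fintype.card (Fin m → Fin d → Bool) = 2^(d*m) := by
    rw [Fintype.card_fun, Fintype.card_fun]
    simp [Fintype.card_fin, Fintype.card_bool, ← pow_mul]
  have hcompl : (Badᶜ : Finset (Fin m → Fin d → Bool)).Nonempty := by
    rw [← Finset.card_pos, Finset.card_compl, hcardU]
    omega
  obtain ⟨M, hM⟩ := hcompl
  have hMgood : ∀ p ∈ P, ∃ j, M j ∉ BadXs p := by
    intro p hp
    by_contra hcon
    push_neg at hcon
    have : M ∈ Bad := by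
      simp only [hBad, mem_filter, mem_univ, true_and]
      exact ⟨p, hp, hcon⟩
    exact (Finset.mem_compl.mp hM) this
  refine ⟨Finset.univ.image M, ?_, ?_⟩
  · calc (Finset.univ.image M).card ≤ (Finset.univ : Finset (Fin m)).card :=
        Finset.card_image_le
      _ = m := by rw [Finset.card_univ, Fintype.card_fin]
      _ = 100*d / Nat.log 2 d := by rw [hm, hL]
  · intro p hp2
    obtain ⟨j, hj⟩ := hMgood p (by simp [hP, hp2])
    refine ⟨M j, Finset.mem_image_of_mem M (Finset.mem_univ j), ?_⟩
    simp only [BadXs, mem_filter, mem_univ, true_and] at hj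
    omega

def pOf (u v : Fin d → Bool) : Fin d → Option Bool :=
  fun i => if u i = v i then none else some (u i)

lemma Kp_pOf (u v : Fin d → Bool) : Kp (pOf u v) = hammingDist u v := by
  rw [hammingDist, Kp, suppP]
  congr 1
  ext i
  simp only [mem_filter, mem_univ, true_and, pOf]
  by_cases h : u i = v i <;> simp [h]

lemma hamming_translate (u v x : Fin d → Bool) :
    (hammingDist x u : ℤ) - hammingDist x v
      = (Kp (pOf u v) : ℤ) - 2 * Ap (pOf u v) x := by
  have h1 : (hammingDist x u : ℤ) = ∑ i : Fin d, (if x i ≠ u i then (1:ℤ) else 0) := by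
    rw [hammingDist, Finset.card_filter]
    push_cast
    rfl
  have h2 : (hammingDist x v : ℤ) = ∑ i : Fin d, (if x i ≠ v i then (1:ℤ) else 0) := by
    rw [hammingDist, Finset.card_filter]
    push_cast
    rfl
  have h3 : (Kp (pOf u v) : ℤ) = ∑ i : Fin d, (if (pOf u v i).isSome then (1:ℤ) else 0) := by
    rw [Kp, suppP, Finset.card_filter]
    push_cast
    rfl
  have h4 : (Ap (pOf u v) x : ℤ) = ∑ i : Fin d, (if pOf u v i = some (x i) then (1:ℤ) else 0) := by
    rw [Ap, Finset.card_filter]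
    push_cast
    rfl
  rw [h1, h2, h3, h4, ← Finset.sum_sub_distrib, Finset.mul_sum, ← Finset.sum_sub_distrib]
  refine Finset.sum_congr rfl fun i _ => ?_
  by_cases huv : u i = v i
  · simp only [pOf, huv, if_pos rfl]
    cases hx : x i <;> cases hv : v i <;> simp [huv, hx, hv] <;> simp_all
  · simp only [pOf, if_neg huv]
    cases hu : u i <;> cases hv : v i <;> cases hx : x i <;> simp_all <;> norm_num

theorem exists_small_separating_set :
    ∃ c : ℝ, 0 < c ∧ ∃ d₀ : ℕ, ∀ d : ℕ, d₀ ≤ d →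
      ∃ S : Finset (Fin d → Bool),
        (S.card : ℝ) ≤ c * d / Real.logb 2 d ∧
        ∀ u v : Fin d → Bool, 2 ≤ hammingDist u v →
          ∃ x ∈ S, 2 ≤ |(hammingDist x u : ℤ) - (hammingDist x v : ℤ)| := by
  refine ⟨200, by norm_num, 2^16, fun d hd => ?_⟩
  obtain ⟨S, hScard, hSsep⟩ := master d hd
  refine ⟨S, ?_, ?_⟩
  · -- cardinality bound
    obtain ⟨L, hL⟩ : ∃ L, L = Nat.log 2 d := ⟨_, rfl⟩
    have hd0 : d ≠ 0 := by positivity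
    have hL16 : 16 ≤ L := hL ▸ (Nat.le_log_iff_pow_le (by norm_num) hd0).mpr hd
    have hdU : d < 2^(L+1) := hL ▸ Nat.lt_pow_succ_log_self (by norm_num) d
    have hlogpos : (0:ℝ) < Real.logb 2 d := by
      apply Real.logb_pos (by norm_num)
      have : (2:ℝ)^16 ≤ (d:ℝ) := by exact_mod_cast hd
      nlinarith [this]
    have hlogle : Real.logb 2 d ≤ (L:ℝ) + 1 := by
      have hcast : (d:ℝ) ≤ (2:ℝ)^(L+1) := by exact_mod_cast le_of_lt hdU
      have hdpos : (0:ℝ) < d := by exact_mod_cast Nat.pos_of_ne_zero hd0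
      calc Real.logb 2 d ≤ Real.logb 2 ((2:ℝ)^(L+1)) :=
            Real.logb_le_logb_of_le (by norm_num) hdpos hcast
        _ = ((L:ℝ)+1) := by
            rw [Real.logb_pow]  -- may need adjustment
            simp [Real.logb_self_eq_one]
    have hm1 : (S.card : ℝ) ≤ ((100*d / Nat.log 2 d : ℕ) : ℝ) := by exact_mod_cast hScard
    have hm2 : ((100*d / Nat.log 2 d : ℕ) : ℝ) ≤ (100*d : ℝ) / (L:ℝ) := by
      rw [hL]
      calc ((100*d / Nat.log 2 d : ℕ) : ℝ) ≤ ((100*d : ℕ):ℝ) / ((Nat.log 2 d : ℕ):ℝ) :=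
            Nat.cast_div_le
        _ = (100*d : ℝ) / ((Nat.log 2 d : ℕ):ℝ) := by push_cast; ring_nf
    have hLpos : (0:ℝ) < L := by positivity
    have hm3 : (100*d : ℝ) / (L:ℝ) ≤ 200 * d / Real.logb 2 d := by
      rw [div_le_div_iff₀ hLpos hlogpos]
      have h1 : Real.logb 2 d ≤ 2*(L:ℝ) := by
        have : (L:ℝ) + 1 ≤ 2*L := by
          have : (16:ℝ) ≤ L := by exact_mod_cast hL16
          linarith
        linarith
      have hd0' : (0:ℝ) ≤ (d:ℝ) := by positivity
      nlinarith [h1, hd0']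
    calc (S.card : ℝ) ≤ _ := hm1
      _ ≤ (100*d : ℝ) / (L:ℝ) := hm2
      _ ≤ 200 * d / Real.logb 2 d := hm3
  · intro u v huv
    have hK : 2 ≤ Kp (pOf u v) := by rw [Kp_pOf]; exact huv
    obtain ⟨x, hxS, hx⟩ := hSsep (pOf u v) hK
    refine ⟨x, hxS, ?_⟩
    rw [hamming_translate u v x]
    rw [Int.abs_eq_natAbs]
    exact_mod_cast hx
end
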